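/- Let x be an (L+1)-dimensional vector sorted in descending order and let x* be obtained from x by a balancing interchange of components l and s with l < s, x_l > x_s, x_l > x_a for all a > l, and x_s < x_b for all b < s. Then κ(x*) = κ(x) − 2(s − l) if x_l ≥ x_s + 2, and κ(x*) = κ(x) if x_l = x_s + 1. -/
import Mathlib


open Finset

/-- The `k`-th largest component of `x` (0-indexed): descending sort. -/
def sortDesc {M : Nat} (x : Fin M → Nat) : Fin M → Nat :=
  fun k => x (Tuple.sort x k.rev)

/-- Imbalance index `κ(x) = Σ_{i<j} (x_[i] - x_[j])` over descending-sorted components. -/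
def kappa {M : Nat} (x : Fin M → Nat) : Int :=
  ∑ i : Fin M, ∑ j : Fin M,
    if i < j then (sortDesc x i : Int) - (sortDesc x j : Int) else 0

/-- `y` is obtained from `x` by a balancing interchange at components `i, j`. -/
def BalInterchange {M : Nat} (x y : Fin M → Nat) (i j : Fin M) : Prop :=
  i ≠ j ∧ x j + 1 ≤ x i ∧ y i = x i - 1 ∧ y j = x j + 1 ∧
    ∀ k, k ≠ i → k ≠ j → y k = x k

lemma two_kappa {M : Nat} (x : Fin M → Nat) :
    2 * kappa x = ∑ a : Fin M, ∑ b : Fin M, |(x a : Int) - (x b : Int)| := by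
  set v : Fin M → Nat := sortDesc x with hv
  have hanti : Antitone v := by
    intro i j hij
    exact Tuple.monotone_sort x (Fin.rev_le_rev.2 hij)
  have key : ∀ i j : Fin M, |(v i : Int) - (v j : Int)| =
      (if i < j then (v i : Int) - v j else 0) +
      (if j < i then (v j : Int) - v i else 0) := by
    intro i j
    rcases lt_trichotomy i j with h | h | h
    · have h2 : v j ≤ v i := hanti h.le
      simp only [if_pos h, if_neg h.asymm, abs_eq_max_neg]
      first | omega | (split_ifs <;> first | omega | tauto)
    · subst h; simp
    · have h2 : v i ≤ v j := hanti h.le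
      simp only [if_pos h, if_neg h.asymm, abs_eq_max_neg]
      first | omega | (split_ifs <;> first | omega | tauto)
  have step1 : (∑ i : Fin M, ∑ j : Fin M, |(v i : Int) - (v j : Int)|) = 2 * kappa x := by
    rw [kappa, two_mul]
    calc (∑ i : Fin M, ∑ j : Fin M, |(v i : Int) - (v j : Int)|)
        = ∑ i : Fin M, ∑ j : Fin M, ((if i < j then (v i : Int) - v j else 0) +
            (if j < i then (v j : Int) - v i else 0)) := by
          simp only [key]
      _ = (∑ i : Fin M, ∑ j : Fin M, (if i < j then (v i : Int) - v j else 0)) +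
          ∑ i : Fin M, ∑ j : Fin M, (if j < i then (v j : Int) - v i else 0) := by
          rw [← Finset.sum_add_distrib]
          exact Finset.sum_congr rfl fun i _ => by rw [← Finset.sum_add_distrib]
      _ = (∑ i : Fin M, ∑ j : Fin M, (if i < j then (v i : Int) - v j else 0)) +
          ∑ i : Fin M, ∑ j : Fin M, (if i < j then (v i : Int) - v j else 0) := by
          congr 1
          rw [Finset.sum_comm]
      _ = _ := by rw [hv]
  rw [← step1]
  set e : Equiv.Perm (Fin M) := Fin.revPerm.trans (Tuple.sort x) with he
  have hve : ∀ k, v k = x (e k) := fun k => rfl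
  calc (∑ i : Fin M, ∑ j : Fin M, |(v i : Int) - (v j : Int)|)
      = ∑ i : Fin M, ∑ j : Fin M, |(x (e i) : Int) - (x (e j) : Int)| := by
        simp only [hve]
    _ = ∑ i : Fin M, ∑ b : Fin M, |(x (e i) : Int) - (x b : Int)| :=
        Finset.sum_congr rfl fun i _ =>
          Equiv.sum_comp e (fun b => |(x (e i) : Int) - (x b : Int)|)
    _ = ∑ a : Fin M, ∑ b : Fin M, |(x a : Int) - (x b : Int)| :=
        Equiv.sum_comp e (fun a => ∑ b : Fin M, |(x a : Int) - (x b : Int)|)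

/-- Row l profile. -/
def Pfun {M : Nat} (l s : Fin M) (b : Fin M) : Int :=
  (if b < l then 1 else 0) - (if l < b then 1 else 0) - (if b = s then 1 else 0)

/-- Row s profile. -/
def Qfun {M : Nat} (l s : Fin M) (b : Fin M) : Int :=
  (if s < b then 1 else 0) - (if b < s then 1 else 0) - (if b = l then 1 else 0)

lemma sum_guard {M : Nat} (p : Prop) [Decidable p] (f : Fin M → Int) :
    (∑ b : Fin M, if p then f b else 0) = if p then ∑ b : Fin M, f b else 0 := by
  split <;> simp

theorem stmt2 {L : Nat} (x : Fin (L + 1) → Nat) (hx : Antitone x)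
    (l s : Fin (L + 1)) (hls : l < s) (hxls : x s < x l)
    (hl : ∀ a, l < a → x a < x l) (hs : ∀ b, b < s → x s < x b) :
    kappa (Function.update (Function.update x l (x l - 1)) s (x s + 1)) =
      kappa x - 2 * (((s : Nat) : Int) - ((l : Nat) : Int)) *
        (if x s + 2 ≤ x l then 1 else 0) := by
  set y := Function.update (Function.update x l (x l - 1)) s (x s + 1) with hy
  have hne : l ≠ s := hls.ne
  have hyl : y l = x l - 1 := by
    simp [hy, Function.update_apply, hne]
  have hys : y s = x s + 1 := by
    simp [hy]
  have hyk : ∀ k, k ≠ l → k ≠ s → y k = x k := by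
    intro k h1 h2
    simp [hy, Function.update_apply, h1, h2]
  by_cases h2 : x s + 2 ≤ x l
  · -- main case
    have key : ∀ a b : Fin (L + 1), |(y a : Int) - (y b : Int)| =
        |(x a : Int) - (x b : Int)|
        + (if a = l then Pfun l s b else 0) + (if a = s then Qfun l s b else 0)
        + (if b = l then Pfun l s a else 0) + (if b = s then Qfun l s a else 0)
        + (if a = l ∧ b = s then 2 else 0) + (if a = s ∧ b = l then 2 else 0) := by
      intro a b
      rcases eq_or_ne a l with heq | hal
      · rw [heq]
        rcases eq_or_ne b l with heq1 | hbl
        · rw [heq1]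
          simp [Pfun, Qfun, hne, hls.asymm, lt_irrefl]
        · rcases eq_or_ne b s with heq2 | hbs
          · rw [heq2]
            simp only [Pfun, Qfun, hyl, hys, if_pos hls, if_neg hls.asymm,
              if_neg hne, if_neg hne.symm, if_pos rfl, abs_eq_max_neg,
              and_self, true_and, and_true, if_true, if_false,
              lt_self_iff_false, and_false, false_and]
            first | omega | (split_ifs <;> first | omega | tauto)
          · have hyb := hyk b hbl hbs
            rcases lt_or_gt_of_ne hbl with hb | hb
            · have f1 : x l ≤ x b := hx hb.le
              simp only [Pfun, Qfun, hyl, hyb, if_pos hb, if_neg hb.asymm,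
                if_neg hbs, if_neg hbl, if_neg hne, if_pos rfl, abs_eq_max_neg,
                true_and, if_true, if_false, and_false, false_and,
                if_neg (by simp [hbs] : ¬ (l = l ∧ b = s)),
                if_neg (by simp [hne] : ¬ (l = s ∧ b = l))]
              first | omega | (split_ifs <;> first | omega | tauto)
            · have f1 : x b < x l := hl b hb
              simp only [Pfun, Qfun, hyl, hyb, if_neg hb.asymm, if_pos hb,
                if_neg hbs, if_neg hbl, if_neg hne, if_pos rfl, abs_eq_max_neg,
                if_neg (by simp [hbs] : ¬ (l = l ∧ b = s)),
                if_neg (by simp [hne] : ¬ (l = s ∧ b = l))]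
              first | omega | (split_ifs <;> first | omega | tauto)
      · rcases eq_or_ne a s with heq3 | has
        · rw [heq3]
          rcases eq_or_ne b l with heq6 | hbl
          · rw [heq6]
            simp only [Pfun, Qfun, hyl, hys, if_pos hls, if_neg hls.asymm,
              if_neg hne, if_neg hne.symm, if_pos rfl, abs_eq_max_neg,
              if_neg (by simp [hne.symm] : ¬ (s = l ∧ l = s)),
              if_pos (⟨rfl, rfl⟩ : s = s ∧ l = l)]
            first | omega | (split_ifs <;> first | omega | tauto)
          · rcases eq_or_ne b s with heq4 | hbs
            · rw [heq4]
              simp [Pfun, Qfun, hne, hne.symm, hls.asymm, lt_irrefl]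
            · have hyb := hyk b hbl hbs
              rcases lt_or_gt_of_ne hbs with hb | hb
              · have f1 : x s < x b := hs b hb
                simp only [Pfun, Qfun, hys, hyb, if_pos hb, if_neg hb.asymm,
                  if_neg hbs, if_neg hbl, if_neg hne.symm, if_pos rfl, abs_eq_max_neg,
                  if_neg (by simp [hne.symm] : ¬ (s = l ∧ b = s)),
                  if_neg (by simp [hbl] : ¬ (s = s ∧ b = l))]
                first | omega | (split_ifs <;> first | omega | tauto)
              · have f1 : x b ≤ x s := hx hb.le
                simp only [Pfun, Qfun, hys, hyb, if_neg hb.asymm, if_pos hb,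
                  if_neg hbs, if_neg hbl, if_neg hne.symm, if_pos rfl, abs_eq_max_neg,
                  if_neg (by simp [hne.symm] : ¬ (s = l ∧ b = s)),
                  if_neg (by simp [hbl] : ¬ (s = s ∧ b = l))]
                first | omega | (split_ifs <;> first | omega | tauto)
        · have hya := hyk a hal has
          rcases eq_or_ne b l with heq | hbl
          · rw [heq]
            rcases lt_or_gt_of_ne hal with ha | ha
            · have f1 : x l ≤ x a := hx ha.le
              simp only [Pfun, Qfun, hya, hyl, if_pos ha, if_neg ha.asymm,
                if_neg hal, if_neg has, if_neg hne, if_pos rfl, abs_eq_max_neg,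
                if_neg (by simp [hal] : ¬ (a = l ∧ l = s)),
                if_neg (by simp [has] : ¬ (a = s ∧ l = l))]
              first | omega | (split_ifs <;> first | omega | tauto)
            · have f1 : x a < x l := hl a ha
              simp only [Pfun, Qfun, hya, hyl, if_neg ha.asymm, if_pos ha,
                if_neg hal, if_neg has, if_neg hne, if_pos rfl, abs_eq_max_neg,
                if_neg (by simp [hal] : ¬ (a = l ∧ l = s)),
                if_neg (by simp [has] : ¬ (a = s ∧ l = l))]
              first | omega | (split_ifs <;> first | omega | tauto)
          · rcases eq_or_ne b s with heq5 | hbs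
            · rw [heq5]
              rcases lt_or_gt_of_ne has with ha | ha
              · have f1 : x s < x a := hs a ha
                simp only [Pfun, Qfun, hya, hys, if_pos ha, if_neg ha.asymm,
                  if_neg hal, if_neg has, if_neg hne.symm, if_pos rfl, abs_eq_max_neg,
                  if_neg (by simp [hal] : ¬ (a = l ∧ s = s)),
                  if_neg (by simp [has] : ¬ (a = s ∧ s = l))]
                first | omega | (split_ifs <;> first | omega | tauto)
              · have f1 : x a ≤ x s := hx ha.le
                simp only [Pfun, Qfun, hya, hys, if_neg ha.asymm, if_pos ha,
                  if_neg hal, if_neg has, if_neg hne.symm, if_pos rfl, abs_eq_max_neg,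
                  if_neg (by simp [hal] : ¬ (a = l ∧ s = s)),
                  if_neg (by simp [has] : ¬ (a = s ∧ s = l))]
                first | omega | (split_ifs <;> first | omega | tauto)
            · have hyb := hyk b hbl hbs
              simp [Pfun, Qfun, hya, hyb, hal, has, hbl, hbs]
    -- counting sums
    have c1 : ∀ t : Fin (L + 1),
        (∑ b : Fin (L + 1), if b < t then (1 : Int) else 0) = (t : Nat) := by
      intro t
      rw [Finset.sum_boole]
      have : Finset.filter (fun b => b < t) Finset.univ = Finset.Iio t := by
        ext b; simp
      rw [this, Fin.card_Iio]
    have c2 : ∀ t : Fin (L + 1),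
        (∑ b : Fin (L + 1), if t < b then (1 : Int) else 0) = ((L - (t : Nat) : Nat) : Int) := by
      intro t
      rw [Finset.sum_boole]
      have : Finset.filter (fun b => t < b) Finset.univ = Finset.Ioi t := by
        ext b; simp
      rw [this, Fin.card_Ioi]
      norm_num
    have c3 : ∀ t : Fin (L + 1),
        (∑ b : Fin (L + 1), if b = t then (1 : Int) else 0) = 1 := by
      intro t
      rw [Finset.sum_ite_eq' Finset.univ t (fun _ => (1 : Int))]
      simp
    have sumP : (∑ b : Fin (L + 1), Pfun l s b)
        = ((l : Nat) : Int) - ((L - (l : Nat) : Nat) : Int) - 1 := by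
      simp only [Pfun]
      rw [Finset.sum_sub_distrib, Finset.sum_sub_distrib, c1, c2, c3]
    have sumQ : (∑ b : Fin (L + 1), Qfun l s b)
        = ((L - (s : Nat) : Nat) : Int) - ((s : Nat) : Int) - 1 := by
      simp only [Qfun]
      rw [Finset.sum_sub_distrib, Finset.sum_sub_distrib, c1, c2, c3]
    have main : 2 * kappa y = 2 * kappa x
        + 2 * ((∑ b : Fin (L + 1), Pfun l s b) + (∑ b : Fin (L + 1), Qfun l s b)) + 4 := by
      rw [two_kappa, two_kappa]
      calc (∑ a : Fin (L + 1), ∑ b : Fin (L + 1), |(y a : Int) - (y b : Int)|)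
          = ∑ a : Fin (L + 1), ∑ b : Fin (L + 1),
              (|(x a : Int) - (x b : Int)|
              + (if a = l then Pfun l s b else 0) + (if a = s then Qfun l s b else 0)
              + (if b = l then Pfun l s a else 0) + (if b = s then Qfun l s a else 0)
              + (if a = l ∧ b = s then 2 else 0) + (if a = s ∧ b = l then 2 else 0)) := by
            exact Finset.sum_congr rfl fun a _ => Finset.sum_congr rfl fun b _ => key a b
        _ = _ := by
            simp only [Finset.sum_add_distrib]
            rw [show (∑ a : Fin (L + 1), ∑ b : Fin (L + 1),
                  (if a = l then Pfun l s b else 0)) = ∑ b : Fin (L + 1), Pfun l s b by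
                simp only [sum_guard]
                rw [Finset.sum_ite_eq' Finset.univ l (fun _ => ∑ b : Fin (L + 1), Pfun l s b)]
                simp,
              show (∑ a : Fin (L + 1), ∑ b : Fin (L + 1),
                  (if a = s then Qfun l s b else 0)) = ∑ b : Fin (L + 1), Qfun l s b by
                simp only [sum_guard]
                rw [Finset.sum_ite_eq' Finset.univ s (fun _ => ∑ b : Fin (L + 1), Qfun l s b)]
                simp,
              show (∑ a : Fin (L + 1), ∑ b : Fin (L + 1),
                  (if b = l then Pfun l s a else 0)) = ∑ a : Fin (L + 1), Pfun l s a by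
                exact Finset.sum_congr rfl fun a _ => by
                  rw [Finset.sum_ite_eq' Finset.univ l (fun _ => Pfun l s a)]; simp,
              show (∑ a : Fin (L + 1), ∑ b : Fin (L + 1),
                  (if b = s then Qfun l s a else 0)) = ∑ a : Fin (L + 1), Qfun l s a by
                exact Finset.sum_congr rfl fun a _ => by
                  rw [Finset.sum_ite_eq' Finset.univ s (fun _ => Qfun l s a)]; simp,
              show (∑ a : Fin (L + 1), ∑ b : Fin (L + 1),
                  (if a = l ∧ b = s then (2 : Int) else 0)) = 2 by
                simp only [ite_and]
                simp only [sum_guard]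
                rw [Finset.sum_ite_eq' Finset.univ l
                  (fun _ => ∑ b : Fin (L + 1), if b = s then (2 : Int) else 0)]
                rw [if_pos (Finset.mem_univ l),
                  Finset.sum_ite_eq' Finset.univ s (fun _ => (2 : Int))]
                simp,
              show (∑ a : Fin (L + 1), ∑ b : Fin (L + 1),
                  (if a = s ∧ b = l then (2 : Int) else 0)) = 2 by
                simp only [ite_and]
                simp only [sum_guard]
                rw [Finset.sum_ite_eq' Finset.univ s
                  (fun _ => ∑ b : Fin (L + 1), if b = l then (2 : Int) else 0)]
                rw [if_pos (Finset.mem_univ s),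
                  Finset.sum_ite_eq' Finset.univ l (fun _ => (2 : Int))]
                simp]
            ring
    rw [if_pos h2]
    rw [sumP, sumQ] at main
    have hl1 : (l : Nat) < s := hls
    have hs1 : (s : Nat) ≤ L := Nat.lt_succ_iff.mp s.isLt
    have hcast : ((L - (l : Nat) : Nat) : Int) = (L : Int) - ((l : Nat) : Int) := by
      have : (l : Nat) ≤ L := le_trans hl1.le hs1
      omega
    have hcast2 : ((L - (s : Nat) : Nat) : Int) = (L : Int) - ((s : Nat) : Int) := by
      omega
    rw [hcast, hcast2] at main
    linarith
  · -- swap case: x l = x s + 1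
    have hxl : x l = x s + 1 := by omega
    have hswap : ∀ k, y k = x (Equiv.swap l s k) := by
      intro k
      rcases eq_or_ne k l with heq | h1
      · rw [heq]
        rw [hyl, Equiv.swap_apply_left]; omega
      · rcases eq_or_ne k s with rfl | h2'
        · rw [hys, Equiv.swap_apply_right]; omega
        · rw [hyk k h1 h2', Equiv.swap_apply_of_ne_of_ne h1 h2']
    have main : 2 * kappa y = 2 * kappa x := by
      rw [two_kappa, two_kappa]
      calc (∑ a : Fin (L + 1), ∑ b : Fin (L + 1), |(y a : Int) - (y b : Int)|)
          = ∑ a : Fin (L + 1), ∑ b : Fin (L + 1),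
              |(x (Equiv.swap l s a) : Int) - (x (Equiv.swap l s b) : Int)| := by
            simp only [hswap]
        _ = ∑ a : Fin (L + 1), ∑ b : Fin (L + 1),
              |(x (Equiv.swap l s a) : Int) - (x b : Int)| :=
            Finset.sum_congr rfl fun a _ =>
              Equiv.sum_comp (Equiv.swap l s) (fun b => |(x (Equiv.swap l s a) : Int) - (x b : Int)|)
        _ = ∑ a : Fin (L + 1), ∑ b : Fin (L + 1), |(x a : Int) - (x b : Int)| :=
            Equiv.sum_comp (Equiv.swap l s)
              (fun a => ∑ b : Fin (L + 1), |(x a : Int) - (x b : Int)|)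
    rw [if_neg h2]
    linarith
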